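/- arXiv:1006.2582 — 3 statements merged into one kernel-verified Lean document; each statement's English description precedes it below -/
import Mathlib

section
/- Let φ: E → F be a morphism of first-quadrant-bounded spectral sequences (in an abelian category) converging to filtered abutments H_E and H_F. Suppose that on the E_2 page, φ_2^{p,q}: E_2^{p,q} → F_2^{p,q} is an isomorphism for all p ≤ -2, a monomorphism for p = -1, and zero for p = 0, and that both spectral sequences vanish in columns p > 0. Then φ_∞^{p,q} is a monomorphism for every p ≤ -1, and the kernel of the induced map H(φ): H_E → H_F equals the filtration subspace L^0 H_E. -/
open CategoryTheory

/-- A bounded, convergent, cohomological spectral sequence of abelian groups,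
starting at the `E₂`-page.  The field `E r` is the page `E_{r+2}`; `d` is the
differential `E_r^{p,q} → E_r^{p+r, q-r+1}`; `next` identifies the `(r+1)`-st page
with the homology (kernel modulo image) of the `r`-th page; `H` is the graded
abutment, with finite decreasing filtration `L` whose graded pieces
`L^s H^{s+t}/L^{s+1} H^{s+t}` are identified (`stabIso`) with the stable value
`E_∞^{s,t} = E_r^{s,t}` for `r ≥ stab s t`. -/
structure ConvSS : Type 1 where
  E : ℕ → ℤ → ℤ → AddCommGrpCat.{0}
  d : ∀ (r : ℕ) (p q p' q' : ℤ), p + ((r : ℤ) + 2) = p' → q - ((r : ℤ) + 2) + 1 = q' →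
      (↥(E r p q) →+ ↥(E r p' q'))
  d_comp_d : ∀ (r : ℕ) (p q p' q' p'' q'' : ℤ) (h1 : p + ((r : ℤ) + 2) = p')
      (h2 : q - ((r : ℤ) + 2) + 1 = q') (h3 : p' + ((r : ℤ) + 2) = p'')
      (h4 : q' - ((r : ℤ) + 2) + 1 = q''),
      (d r p' q' p'' q'' h3 h4).comp (d r p q p' q' h1 h2) = 0
  next : ∀ (r : ℕ) (p q : ℤ),
      ↥(E (r + 1) p q) ≃+
        (↥((d r p q (p + ((r : ℤ) + 2)) (q - ((r : ℤ) + 2) + 1) rfl rfl).ker) ⧸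
          ((d r (p - ((r : ℤ) + 2)) (q + ((r : ℤ) + 2) - 1) p q (by ring)
              (by ring)).range.addSubgroupOf
            (d r p q (p + ((r : ℤ) + 2)) (q - ((r : ℤ) + 2) + 1) rfl rfl).ker))
  bound : ℕ
  bdd : ∀ (r : ℕ) (p q : ℤ), ((bound : ℤ) < |p| ∨ (bound : ℤ) < |q|) →
      Subsingleton ↥(E r p q)
  H : ℤ → AddCommGrpCat.{0}
  L : ℤ → (n : ℤ) → AddSubgroup ↥(H n)
  L_antitone : ∀ n : ℤ, Antitone (fun s => L s n)
  L_exhaustive : ∀ n : ℤ, ∃ s : ℤ, L s n = ⊤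
  L_separated : ∀ n : ℤ, ∃ s : ℤ, L s n = ⊥
  stab : ℤ → ℤ → ℕ
  stabIso : ∀ (s t : ℤ) (r : ℕ), stab s t ≤ r →
      ((↥(L s (s + t)) ⧸ (L (s + 1) (s + t)).addSubgroupOf (L s (s + t))) ≃+
        ↥(E r s t))

/-- A morphism of convergent spectral sequences: maps on every page commuting with the
differentials and compatible with the passage to the next page (induced map on
homology), together with a filtered map of abutments compatible with the
identification of the graded pieces with the stable pages. -/
structure ConvSS.Hom (A B : ConvSS) where
  f : ∀ (r : ℕ) (p q : ℤ), ↥(A.E r p q) →+ ↥(B.E r p q)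
  comm : ∀ (r : ℕ) (p q p' q' : ℤ) (h1 : p + ((r : ℤ) + 2) = p')
      (h2 : q - ((r : ℤ) + 2) + 1 = q'),
      (f r p' q').comp (A.d r p q p' q' h1 h2) = (B.d r p q p' q' h1 h2).comp (f r p q)
  compat_next : ∀ (r : ℕ) (p q : ℤ)
      (x : ↥((A.d r p q (p + ((r : ℤ) + 2)) (q - ((r : ℤ) + 2) + 1) rfl rfl).ker))
      (y : ↥((B.d r p q (p + ((r : ℤ) + 2)) (q - ((r : ℤ) + 2) + 1) rfl rfl).ker))
      (_ : (y : ↥(B.E r p q)) = f r p q (x : ↥(A.E r p q)))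
      (z : ↥(A.E (r + 1) p q)),
      A.next r p q z = QuotientAddGroup.mk x →
      B.next r p q (f (r + 1) p q z) = QuotientAddGroup.mk y
  h : ∀ n : ℤ, ↥(A.H n) →+ ↥(B.H n)
  filt : ∀ (s n : ℤ), (A.L s n).map (h n) ≤ B.L s n
  compat_abut : ∀ (s t : ℤ) (r : ℕ) (hA : A.stab s t ≤ r) (hB : B.stab s t ≤ r)
      (x : ↥(A.L s (s + t))) (y : ↥(B.L s (s + t)))
      (_ : (y : ↥(B.H (s + t))) = h (s + t) (x : ↥(A.H (s + t)))),
      B.stabIso s t r hB (QuotientAddGroup.mk y) =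
        f r s t (A.stabIso s t r hA (QuotientAddGroup.mk x))


section Aux

private lemma quot_subsingleton {G : Type} [AddGroup G] [Subsingleton G]
    (N : AddSubgroup G) : Subsingleton (G ⧸ N) :=
  ⟨fun x y => QuotientAddGroup.induction_on x fun a =>
    QuotientAddGroup.induction_on y fun b => by rw [Subsingleton.elim a b]⟩

/-- Columns `p > 0` vanish on every page if they vanish on the `E₂`-page. -/
private lemma page_subsingleton (A : ConvSS)
    (h0 : ∀ p q : ℤ, 0 < p → Subsingleton ↥(A.E 0 p q)) :
    ∀ (r : ℕ) (p q : ℤ), 0 < p → Subsingleton ↥(A.E r p q) := by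
  intro r
  induction r with
  | zero => exact h0
  | succ r ih =>
    intro p q hp
    have h1 : Subsingleton ↥(A.E r p q) := ih p q hp
    have h2 : Subsingleton
        (↥((A.d r p q (p + ((r : ℤ) + 2)) (q - ((r : ℤ) + 2) + 1) rfl rfl).ker) ⧸
          ((A.d r (p - ((r : ℤ) + 2)) (q + ((r : ℤ) + 2) - 1) p q (by ring)
              (by ring)).range.addSubgroupOf
            (A.d r p q (p + ((r : ℤ) + 2)) (q - ((r : ℤ) + 2) + 1) rfl rfl).ker)) :=
      quot_subsingleton _
    exact (A.next r p q).toEquiv.subsingleton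

/-- The main inductive invariant along the pages. -/
private lemma invariant (A B : ConvSS) (φ : ConvSS.Hom A B)
    (hiso : ∀ p q : ℤ, p ≤ -2 → Function.Bijective (φ.f 0 p q))
    (hmono : ∀ q : ℤ, Function.Injective (φ.f 0 (-1) q))
    (hzero : ∀ q : ℤ, φ.f 0 0 q = 0) :
    ∀ r : ℕ, (∀ q : ℤ, φ.f r 0 q = 0) ∧
      (∀ p q : ℤ, p ≤ -1 → Function.Injective (φ.f r p q)) ∧
      (∀ p q : ℤ, p ≤ -(r : ℤ) - 2 → Function.Surjective (φ.f r p q)) := by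
  intro r
  induction r with
  | zero =>
    refine ⟨hzero, ?_, ?_⟩
    · intro p q hp
      rcases lt_or_eq_of_le hp with h | h
      · exact (hiso p q (by omega)).1
      · exact h ▸ hmono q
    · intro p q hp
      exact (hiso p q (by omega)).2
  | succ r ih =>
    obtain ⟨ihz, ihi, ihs⟩ := ih
    refine ⟨?_, ?_, ?_⟩
    · -- zero in column 0
      intro q
      ext z
      obtain ⟨x, hx⟩ := QuotientAddGroup.mk'_surjective _ (A.next r 0 q z)
      have hnext := φ.compat_next r 0 q x ⟨0, zero_mem _⟩
        (by simp [ihz q]) z hx.symm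
      have h0 : B.next r 0 q (φ.f (r + 1) 0 q z) = 0 := by
        rw [hnext]
        exact QuotientAddGroup.mk_zero _
      simpa using (AddEquiv.map_eq_zero_iff _).mp h0
    · -- injectivity in columns p ≤ -1
      intro p q hp
      rw [injective_iff_map_eq_zero]
      intro z hz
      obtain ⟨x, hx⟩ := QuotientAddGroup.mk'_surjective _ (A.next r p q z)
      have hxk : A.d r p q (p + ((r : ℤ) + 2)) (q - ((r : ℤ) + 2) + 1) rfl rfl
          (x : ↥(A.E r p q)) = 0 := x.2
      have hyk : B.d r p q (p + ((r : ℤ) + 2)) (q - ((r : ℤ) + 2) + 1) rfl rfl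
          (φ.f r p q (x : ↥(A.E r p q))) = 0 := by
        have hc := DFunLike.congr_fun
          (φ.comm r p q (p + ((r : ℤ) + 2)) (q - ((r : ℤ) + 2) + 1) rfl rfl)
          (x : ↥(A.E r p q))
        simp only [AddMonoidHom.comp_apply] at hc
        rw [← hc, hxk, map_zero]
      have hnext := φ.compat_next r p q x ⟨φ.f r p q (x : ↥(A.E r p q)), hyk⟩ rfl z hx.symm
      rw [hz, map_zero] at hnext
      have hmem := (QuotientAddGroup.eq_zero_iff _).mp hnext.symm
      have hrange : φ.f r p q (x : ↥(A.E r p q)) ∈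
          (B.d r (p - ((r : ℤ) + 2)) (q + ((r : ℤ) + 2) - 1) p q (by ring)
            (by ring)).range := AddSubgroup.mem_addSubgroupOf.mp hmem
      obtain ⟨u, hu⟩ := hrange
      obtain ⟨v, hv⟩ := ihs (p - ((r : ℤ) + 2)) (q + ((r : ℤ) + 2) - 1) (by omega) u
      have hc2 := DFunLike.congr_fun
        (φ.comm r (p - ((r : ℤ) + 2)) (q + ((r : ℤ) + 2) - 1) p q (by ring) (by ring)) v
      simp only [AddMonoidHom.comp_apply] at hc2
      have hxval : (x : ↥(A.E r p q)) =
          A.d r (p - ((r : ℤ) + 2)) (q + ((r : ℤ) + 2) - 1) p q (by ring) (by ring) v := by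
        apply ihi p q hp
        rw [hc2, hv, hu]
      have hx0 : QuotientAddGroup.mk x = (0 :
          ↥((A.d r p q (p + ((r : ℤ) + 2)) (q - ((r : ℤ) + 2) + 1) rfl rfl).ker) ⧸
          ((A.d r (p - ((r : ℤ) + 2)) (q + ((r : ℤ) + 2) - 1) p q (by ring)
              (by ring)).range.addSubgroupOf
            (A.d r p q (p + ((r : ℤ) + 2)) (q - ((r : ℤ) + 2) + 1) rfl rfl).ker)) := by
        rw [QuotientAddGroup.eq_zero_iff]
        exact AddSubgroup.mem_addSubgroupOf.mpr ⟨v, hxval.symm⟩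
      have : A.next r p q z = 0 := by rw [← hx]; exact hx0
      exact (AddEquiv.map_eq_zero_iff _).mp this
    · -- surjectivity in columns p ≤ -(r+1)-2
      intro p q hp w
      obtain ⟨y, hy⟩ := QuotientAddGroup.mk'_surjective _ (B.next r p q w)
      obtain ⟨x0, hx0⟩ := ihs p q (by push_cast at hp ⊢; omega) (y : ↥(B.E r p q))
      have hyk : B.d r p q (p + ((r : ℤ) + 2)) (q - ((r : ℤ) + 2) + 1) rfl rfl
          (y : ↥(B.E r p q)) = 0 := y.2
      have hdx : A.d r p q (p + ((r : ℤ) + 2)) (q - ((r : ℤ) + 2) + 1) rfl rfl x0 = 0 := by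
        apply ihi (p + ((r : ℤ) + 2)) (q - ((r : ℤ) + 2) + 1) (by push_cast at hp ⊢; omega)
        have hc := DFunLike.congr_fun
          (φ.comm r p q (p + ((r : ℤ) + 2)) (q - ((r : ℤ) + 2) + 1) rfl rfl) x0
        simp only [AddMonoidHom.comp_apply] at hc
        rw [hc, hx0, hyk, map_zero]
      set x : ↥((A.d r p q (p + ((r : ℤ) + 2)) (q - ((r : ℤ) + 2) + 1) rfl rfl).ker) :=
        ⟨x0, hdx⟩ with hxdef
      set z := (A.next r p q).symm (QuotientAddGroup.mk x) with hzdef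
      have hz : A.next r p q z = QuotientAddGroup.mk x :=
        (A.next r p q).apply_symm_apply _
      have hnext := φ.compat_next r p q x y (by rw [hxdef]; exact hx0.symm) z hz
      refine ⟨z, ?_⟩
      apply (B.next r p q).injective
      rw [hnext]; exact hy

/-- Climbing the filtration of `A` below column `0`. -/
private lemma climb (A B : ConvSS) (φ : ConvSS.Hom A B)
    (hinj : ∀ (r : ℕ) (p q : ℤ), p ≤ -1 → Function.Injective (φ.f r p q))
    (s t : ℤ) (hs : s ≤ -1) (x : ↥(A.H (s + t))) (hx : x ∈ A.L s (s + t))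
    (hx0 : φ.h (s + t) x = 0) : x ∈ A.L (s + 1) (s + t) := by
  set r := max (A.stab s t) (B.stab s t) with hr
  have key := φ.compat_abut s t r (le_max_left _ _) (le_max_right _ _)
    ⟨x, hx⟩ ⟨0, zero_mem _⟩ (by simp [hx0])
  have h0 : B.stabIso s t r (le_max_right _ _)
      (QuotientAddGroup.mk (⟨0, zero_mem _⟩ : ↥(B.L s (s + t)))) = 0 := by
    have : (QuotientAddGroup.mk (⟨0, zero_mem _⟩ : ↥(B.L s (s + t))) :
        ↥(B.L s (s + t)) ⧸ (B.L (s + 1) (s + t)).addSubgroupOf (B.L s (s + t))) = 0 :=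
      QuotientAddGroup.mk_zero _
    rw [this, map_zero]
  rw [h0] at key
  have h1 : A.stabIso s t r (le_max_left _ _)
      (QuotientAddGroup.mk (⟨x, hx⟩ : ↥(A.L s (s + t)))) = 0 := by
    apply hinj r s t hs
    rw [← key, map_zero]
  have h2 : (QuotientAddGroup.mk (⟨x, hx⟩ : ↥(A.L s (s + t))) :
      ↥(A.L s (s + t)) ⧸ (A.L (s + 1) (s + t)).addSubgroupOf (A.L s (s + t))) = 0 :=
    (AddEquiv.map_eq_zero_iff _).mp h1
  exact AddSubgroup.mem_addSubgroupOf.mp ((QuotientAddGroup.eq_zero_iff _).mp h2)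

/-- For `B`, the filtration is exhausted at level `1`: `L¹ = ⊥`. -/
private lemma B_L1_bot (B : ConvSS)
    (hBcol : ∀ p q : ℤ, 0 < p → Subsingleton ↥(B.E 0 p q)) (n : ℤ) :
    B.L 1 n = ⊥ := by
  have hpages := page_subsingleton B hBcol
  have eqstep : ∀ s : ℤ, 1 ≤ s → B.L s n = B.L (s + 1) n := by
    intro s hs
    have hle : B.L s (s + (n - s)) ≤ B.L (s + 1) (s + (n - s)) := by
      intro x hx
      have hsub : Subsingleton ↥(B.E (B.stab s (n - s)) s (n - s)) :=
        hpages _ s (n - s) (by omega)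
      have hq : Subsingleton (↥(B.L s (s + (n - s))) ⧸
          (B.L (s + 1) (s + (n - s))).addSubgroupOf (B.L s (s + (n - s)))) :=
        (B.stabIso s (n - s) _ le_rfl).toEquiv.subsingleton
      have h0 : (QuotientAddGroup.mk (⟨x, hx⟩ : ↥(B.L s (s + (n - s)))) :
          ↥(B.L s (s + (n - s))) ⧸
            (B.L (s + 1) (s + (n - s))).addSubgroupOf (B.L s (s + (n - s)))) = 0 :=
        Subsingleton.elim _ _
      exact AddSubgroup.mem_addSubgroupOf.mp ((QuotientAddGroup.eq_zero_iff _).mp h0)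
    rw [show s + (n - s) = n by ring] at hle
    exact le_antisymm hle (B.L_antitone n (by omega))
  have const : ∀ s : ℤ, 1 ≤ s → B.L 1 n = B.L s n := by
    refine Int.le_induction rfl ?_
    intro s hs ihc
    rw [ihc, eqstep s hs]
  obtain ⟨s0, hs0⟩ := B.L_separated n
  rcases le_total s0 1 with h | h
  · exact le_bot_iff.mp (hs0 ▸ B.L_antitone n h)
  · rw [const s0 h, hs0]

/-- Elements of `L⁰ H_A` map into `L¹ H_B`. -/
private lemma top_zero (A B : ConvSS) (φ : ConvSS.Hom A B)
    (hzeroN : ∀ (r : ℕ) (q : ℤ), φ.f r 0 q = 0)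
    (t : ℤ) (x : ↥(A.H (0 + t))) (hx : x ∈ A.L 0 (0 + t)) :
    φ.h (0 + t) x ∈ B.L 1 (0 + t) := by
  set r := max (A.stab 0 t) (B.stab 0 t) with hr
  have hyL : φ.h (0 + t) x ∈ B.L 0 (0 + t) :=
    φ.filt 0 (0 + t) (AddSubgroup.mem_map.mpr ⟨x, hx, rfl⟩)
  have key := φ.compat_abut 0 t r (le_max_left _ _) (le_max_right _ _)
    ⟨x, hx⟩ ⟨φ.h (0 + t) x, hyL⟩ rfl
  rw [hzeroN r t] at key
  simp only [AddMonoidHom.zero_apply] at key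
  have h2 : (QuotientAddGroup.mk (⟨φ.h (0 + t) x, hyL⟩ : ↥(B.L 0 (0 + t))) :
      ↥(B.L 0 (0 + t)) ⧸ (B.L (0 + 1) (0 + t)).addSubgroupOf (B.L 0 (0 + t))) = 0 :=
    (AddEquiv.map_eq_zero_iff _).mp key
  have h3 := AddSubgroup.mem_addSubgroupOf.mp ((QuotientAddGroup.eq_zero_iff _).mp h2)
  simpa using h3

end Aux

/-- Let `φ : E → F` be a morphism of bounded spectral sequences living
in the columns `p ≤ 0` (II/III quadrants), converging to filtered abutments `H_E`, `H_F`.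
If on the `E₂`-page `φ₂^{p,q}` is an isomorphism for `p ≤ -2`, a monomorphism for
`p = -1` and zero for `p = 0`, then `φ` is a monomorphism on all later pages in columns
`p ≤ -1` (in particular `φ_∞^{p,q}` is monic for `p ≤ -1`), and the kernel of the induced
map `H(φ) : H_E → H_F` equals the filtration subspace `L^0 H_E`. -/
theorem ss_realignment_mono (A B : ConvSS) (φ : ConvSS.Hom A B)
    (hAcol : ∀ p q : ℤ, 0 < p → Subsingleton ↥(A.E 0 p q))
    (hBcol : ∀ p q : ℤ, 0 < p → Subsingleton ↥(B.E 0 p q))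
    (hiso : ∀ p q : ℤ, p ≤ -2 → Function.Bijective (φ.f 0 p q))
    (hmono : ∀ q : ℤ, Function.Injective (φ.f 0 (-1) q))
    (hzero : ∀ q : ℤ, φ.f 0 0 q = 0) :
    (∀ (r : ℕ) (p q : ℤ), p ≤ -1 → Function.Injective (φ.f r p q)) ∧
    (∀ n : ℤ, (φ.h n).ker = A.L 0 n) := by
  have inv := invariant A B φ hiso hmono hzero
  have hinj : ∀ (r : ℕ) (p q : ℤ), p ≤ -1 → Function.Injective (φ.f r p q) :=
    fun r p q hp => (inv r).2.1 p q hp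
  refine ⟨hinj, ?_⟩
  intro n
  ext x
  simp only [AddMonoidHom.mem_ker]
  constructor
  · -- ker ⊆ L⁰
    intro hx0
    have hstep : ∀ s : ℤ, s ≤ -1 → x ∈ A.L s n → x ∈ A.L (s + 1) n := by
      intro s hs hxs
      have hc := climb A B φ hinj s (n - s) hs
      rw [show s + (n - s) = n by ring] at hc
      exact hc x hxs hx0
    have hclimb : ∀ k : ℕ, x ∈ A.L (-(k : ℤ)) n → x ∈ A.L 0 n := by
      intro k
      induction k with
      | zero => intro hxk; simpa using hxk
      | succ k ihk =>
        intro hxk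
        apply ihk
        have h2 := hstep (-((k : ℤ) + 1)) (by omega)
          (by rw [show (-((k : ℤ) + 1)) = -((k + 1 : ℕ) : ℤ) by push_cast; ring]; exact hxk)
        rwa [show (-((k : ℤ) + 1) + 1) = -(k : ℤ) by ring] at h2
    obtain ⟨s', hs'⟩ := A.L_exhaustive n
    rcases le_total 0 s' with h | h
    · have : x ∈ A.L s' n := hs' ▸ AddSubgroup.mem_top x
      exact A.L_antitone n h this
    · have hx' : x ∈ A.L (-((-s').toNat : ℤ)) n := by
        rw [show (-((-s').toNat : ℤ)) = s' by omega]
        exact hs' ▸ AddSubgroup.mem_top x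
      exact hclimb (-s').toNat hx'
  · -- L⁰ ⊆ ker
    intro hx
    have hzN : ∀ (r : ℕ) (q : ℤ), φ.f r 0 q = 0 := fun r q => (inv r).1 q
    have h1 := top_zero A B φ hzN n
    rw [zero_add] at h1
    have h2 := h1 x hx
    rw [B_L1_bot B hBcol n] at h2
    exact AddSubgroup.mem_bot.mp h2
end

section
/- Let φ: E → F be a morphism of bounded spectral sequences living in columns p ≥ 0, converging to filtered abutments H_E and H_F. Suppose φ_2^{p,q} is an isomorphism for all p > 1, an epimorphism for p = 1, and zero for p = 0. Then φ_∞^{p,q} is an epimorphism for every p ≥ 1, and the image of the induced map H(φ): H_E → H_F equals L^1 H_F. -/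
open CategoryTheory

section SSREHelpers

/-- Surjectivity in columns `p ≥ 1` and injectivity in columns `p ≥ r+2`, by
induction on the page. -/
private lemma SSRE_main (A B : ConvSS) (φ : ConvSS.Hom A B)
    (hiso : ∀ p q : ℤ, 1 < p → Function.Bijective (φ.f 0 p q))
    (hepi : ∀ q : ℤ, Function.Surjective (φ.f 0 1 q)) :
    ∀ r : ℕ, (∀ p q : ℤ, 1 ≤ p → Function.Surjective (φ.f r p q)) ∧
      (∀ p q : ℤ, (r : ℤ) + 2 ≤ p → Function.Injective (φ.f r p q)) := by
  intro r
  induction r with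
  | zero =>
    constructor
    · intro p q hp
      rcases eq_or_lt_of_le hp with h | h
      · exact h ▸ hepi q
      · exact (hiso p q h).2
    · intro p q hp
      exact (hiso p q (by push_cast at hp; omega)).1
  | succ r ih =>
    constructor
    · -- surjectivity on the next page
      intro p q hp w
      obtain ⟨y, hy⟩ := QuotientAddGroup.mk_surjective (B.next r p q w)
      obtain ⟨x₀, hx₀⟩ := ih.1 p q hp (y : ↥(B.E r p q))
      have hker : x₀ ∈ (A.d r p q (p + ((r : ℤ) + 2)) (q - ((r : ℤ) + 2) + 1) rfl rfl).ker := by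
        rw [AddMonoidHom.mem_ker]
        apply ih.2 (p + ((r : ℤ) + 2)) (q - ((r : ℤ) + 2) + 1) (by omega)
        have hcomm := congrArg (fun g => g x₀) (φ.comm r p q _ _ rfl rfl)
        simp only [AddMonoidHom.comp_apply] at hcomm
        rw [map_zero, hcomm, hx₀]
        exact y.2
      refine ⟨(A.next r p q).symm (QuotientAddGroup.mk ⟨x₀, hker⟩), ?_⟩
      apply (B.next r p q).injective
      rw [φ.compat_next r p q ⟨x₀, hker⟩ y hx₀.symm _
        ((A.next r p q).apply_symm_apply _)]
      exact hy
    · -- injectivity on the next page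
      intro p q hp
      rw [injective_iff_map_eq_zero]
      intro z hz
      obtain ⟨x, hx⟩ := QuotientAddGroup.mk_surjective (A.next r p q z)
      have hxk : A.d r p q (p + ((r : ℤ) + 2)) (q - ((r : ℤ) + 2) + 1) rfl rfl
          (x : ↥(A.E r p q)) = 0 := x.2
      have hyk : φ.f r p q (x : ↥(A.E r p q)) ∈
          (B.d r p q (p + ((r : ℤ) + 2)) (q - ((r : ℤ) + 2) + 1) rfl rfl).ker := by
        rw [AddMonoidHom.mem_ker]
        have hcomm := congrArg (fun g => g (x : ↥(A.E r p q))) (φ.comm r p q _ _ rfl rfl)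
        simp only [AddMonoidHom.comp_apply] at hcomm
        rw [← hcomm, hxk, map_zero]
      have hBz := φ.compat_next r p q x ⟨_, hyk⟩ rfl z hx.symm
      rw [hz, map_zero] at hBz
      have hmem := (QuotientAddGroup.eq_zero_iff _).mp hBz.symm
      rw [AddSubgroup.mem_addSubgroupOf] at hmem
      obtain ⟨w₀, hw₀⟩ := hmem
      obtain ⟨u, hu⟩ := ih.1 (p - ((r : ℤ) + 2)) (q + ((r : ℤ) + 2) - 1) (by push_cast at hp; omega) w₀
      have hcomm := congrArg (fun g => g u)
        (φ.comm r (p - ((r : ℤ) + 2)) (q + ((r : ℤ) + 2) - 1) p q (by ring) (by ring))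
      simp only [AddMonoidHom.comp_apply] at hcomm
      have hxu : A.d r (p - ((r : ℤ) + 2)) (q + ((r : ℤ) + 2) - 1) p q (by ring) (by ring) u
          = (x : ↥(A.E r p q)) := by
        apply ih.2 p q (by push_cast at hp ⊢; omega)
        rw [hcomm, hu, hw₀]
      have hx0 : (QuotientAddGroup.mk x :
          _ ⧸ ((A.d r (p - ((r : ℤ) + 2)) (q + ((r : ℤ) + 2) - 1) p q (by ring)
            (by ring)).range.addSubgroupOf
            (A.d r p q (p + ((r : ℤ) + 2)) (q - ((r : ℤ) + 2) + 1) rfl rfl).ker)) = 0 := by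
        rw [QuotientAddGroup.eq_zero_iff, AddSubgroup.mem_addSubgroupOf]
        exact ⟨u, hxu⟩
      have : A.next r p q z = 0 := hx.symm.trans hx0
      exact (A.next r p q).injective (this.trans (map_zero (A.next r p q)).symm)

private lemma SSRE_fzero (A B : ConvSS) (φ : ConvSS.Hom A B)
    (hzero : ∀ q : ℤ, φ.f 0 0 q = 0) :
    ∀ (r : ℕ) (q : ℤ), φ.f r 0 q = 0 := by
  intro r
  induction r with
  | zero => exact hzero
  | succ r ih =>
    intro q
    ext z
    obtain ⟨x, hx⟩ := QuotientAddGroup.mk_surjective (A.next r 0 q z)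
    have h0 : ((0 : ↥(B.d r 0 q (0 + ((r : ℤ) + 2)) (q - ((r : ℤ) + 2) + 1) rfl rfl).ker) :
        ↥(B.E r 0 q)) = φ.f r 0 q (x : ↥(A.E r 0 q)) := by
      rw [ih q]; rfl
    have hc := φ.compat_next r 0 q x 0 h0 z hx.symm
    rw [QuotientAddGroup.mk_zero] at hc
    have := (B.next r 0 q).injective (hc.trans (map_zero (B.next r 0 q)).symm)
    simpa using this

private lemma SSRE_subs (A : ConvSS)
    (hcol : ∀ p q : ℤ, p < 0 → Subsingleton ↥(A.E 0 p q)) :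
    ∀ (r : ℕ) (p q : ℤ), p < 0 → Subsingleton ↥(A.E r p q) := by
  intro r
  induction r with
  | zero => exact hcol
  | succ r ih =>
    intro p q hpq
    haveI := ih p q hpq
    haveI : Subsingleton
        ↥(A.d r p q (p + ((r : ℤ) + 2)) (q - ((r : ℤ) + 2) + 1) rfl rfl).ker :=
      ⟨fun a b => Subtype.ext (Subsingleton.elim _ _)⟩
    haveI : Subsingleton
        (↥(A.d r p q (p + ((r : ℤ) + 2)) (q - ((r : ℤ) + 2) + 1) rfl rfl).ker ⧸
          ((A.d r (p - ((r : ℤ) + 2)) (q + ((r : ℤ) + 2) - 1) p q (by ring)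
              (by ring)).range.addSubgroupOf
            (A.d r p q (p + ((r : ℤ) + 2)) (q - ((r : ℤ) + 2) + 1) rfl rfl).ker)) :=
      QuotientAddGroup.mk_surjective.subsingleton
    exact (A.next r p q).toEquiv.subsingleton

private lemma SSRE_Ltop (A : ConvSS)
    (hsub : ∀ (r : ℕ) (p q : ℤ), p < 0 → Subsingleton ↥(A.E r p q)) :
    ∀ s n : ℤ, s ≤ 0 → A.L s n = ⊤ := by
  have key : ∀ s n : ℤ, s < 0 → A.L s n ≤ A.L (s + 1) n := by
    intro s n hs
    obtain ⟨t, rfl⟩ : ∃ t, n = s + t := ⟨n - s, by ring⟩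
    intro x hx
    haveI := hsub (A.stab s t) s t hs
    have e := A.stabIso s t (A.stab s t) le_rfl
    haveI : Subsingleton (↥(A.L s (s + t)) ⧸
        (A.L (s + 1) (s + t)).addSubgroupOf (A.L s (s + t))) := e.toEquiv.subsingleton
    have h0 : (QuotientAddGroup.mk (⟨x, hx⟩ : ↥(A.L s (s + t))) :
        _ ⧸ (A.L (s + 1) (s + t)).addSubgroupOf (A.L s (s + t))) = 0 :=
      Subsingleton.elim _ _
    have := (QuotientAddGroup.eq_zero_iff _).mp h0
    rwa [AddSubgroup.mem_addSubgroupOf] at this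
  have chain : ∀ (k : ℕ) (n : ℤ), A.L (-(k : ℤ)) n ≤ A.L 0 n := by
    intro k
    induction k with
    | zero => simp
    | succ k ih =>
      intro n
      have h1 : A.L (-((k : ℤ) + 1)) n ≤ A.L (-((k : ℤ) + 1) + 1) n := key _ n (by omega)
      have h2 : (-((k : ℤ) + 1) + 1) = -(k : ℤ) := by ring
      rw [h2] at h1
      calc A.L (-((k + 1 : ℕ) : ℤ)) n = A.L (-((k : ℤ) + 1)) n := by push_cast; ring_nf
        _ ≤ A.L (-(k : ℤ)) n := h1
        _ ≤ A.L 0 n := ih n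
  intro s n hs
  obtain ⟨s₀, h₀⟩ := A.L_exhaustive n
  have htop : A.L 0 n = ⊤ := by
    rcases le_or_gt s₀ 0 with h | h
    · obtain ⟨k, hk⟩ : ∃ k : ℕ, s₀ = -(k : ℤ) := ⟨(-s₀).toNat, by omega⟩
      have := chain k n
      rw [← hk, h₀] at this
      exact top_unique this
    · have := A.L_antitone n h.le
      simp only at this
      rw [h₀] at this
      exact top_unique this
  have := A.L_antitone n hs
  simp only at this
  rw [htop] at this
  exact top_unique this

private def ConvSS.stabIso' (A : ConvSS) (s t n : ℤ) (hn : n = s + t) (r : ℕ)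
    (hr : A.stab s t ≤ r) :
    (↥(A.L s n) ⧸ (A.L (s + 1) n).addSubgroupOf (A.L s n)) ≃+ ↥(A.E r s t) := by
  subst hn; exact A.stabIso s t r hr

private lemma SSRE_compat_abut' (A B : ConvSS) (φ : ConvSS.Hom A B) (s t n : ℤ)
    (hn : n = s + t) (r : ℕ) (hA : A.stab s t ≤ r) (hB : B.stab s t ≤ r)
    (x : ↥(A.L s n)) (y : ↥(B.L s n))
    (hxy : (y : ↥(B.H n)) = φ.h n (x : ↥(A.H n))) :
    B.stabIso' s t n hn r hB (QuotientAddGroup.mk y) =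
      φ.f r s t (A.stabIso' s t n hn r hA (QuotientAddGroup.mk x)) := by
  subst hn; exact φ.compat_abut s t r hA hB x y hxy
private lemma SSRE_incl (A B : ConvSS) (φ : ConvSS.Hom A B)
    (hsurj : ∀ (r : ℕ) (p q : ℤ), 1 ≤ p → Function.Surjective (φ.f r p q)) :
    ∀ n s : ℤ, 1 ≤ s → B.L s n ≤ (A.L s n).map (φ.h n) := by
  intro n
  obtain ⟨sB, hsB⟩ := B.L_separated n
  have main : ∀ (k : ℕ) (s : ℤ), 1 ≤ s → sB ≤ s + k →
      B.L s n ≤ (A.L s n).map (φ.h n) := by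
    intro k
    induction k with
    | zero =>
      intro s _ hks
      have h1 : B.L s n ≤ B.L sB n := B.L_antitone n (by omega)
      rw [hsB] at h1
      intro b hb
      have := h1 hb
      rw [AddSubgroup.mem_bot] at this
      subst this
      exact zero_mem _
    | succ k ih =>
      intro s hs1 hks
      have ihs : B.L (s + 1) n ≤ (A.L (s + 1) n).map (φ.h n) :=
        ih (s + 1) (by omega) (by omega)
      intro b hb
      have hn : n = s + (n - s) := by ring
      set t := n - s with ht
      set r := max (A.stab s t) (B.stab s t) with hr
      have hA : A.stab s t ≤ r := le_max_left _ _
      have hB : B.stab s t ≤ r := le_max_right _ _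
      obtain ⟨a', ha'⟩ := hsurj r s t hs1
        (B.stabIso' s t n hn r hB (QuotientAddGroup.mk ⟨b, hb⟩))
      obtain ⟨xq, hxq⟩ := (A.stabIso' s t n hn r hA).surjective a'
      obtain ⟨x, rfl⟩ := QuotientAddGroup.mk_surjective xq
      have hy : φ.h n (x : ↥(A.H n)) ∈ B.L s n := φ.filt s n ⟨(x : ↥(A.H n)), x.2, rfl⟩
      have hc := SSRE_compat_abut' A B φ s t n hn r hA hB x ⟨φ.h n (x : ↥(A.H n)), hy⟩ rfl
      rw [hxq, ha'] at hc
      have hq := (B.stabIso' s t n hn r hB).injective hc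
      rw [QuotientAddGroup.eq] at hq
      rw [AddSubgroup.mem_addSubgroupOf] at hq
      have hb2 : -(φ.h n (x : ↥(A.H n))) + b ∈ B.L (s + 1) n := by simpa using hq
      have := ihs hb2
      rw [AddSubgroup.mem_map] at this
      obtain ⟨a2, ha2mem, ha2⟩ := this
      rw [AddSubgroup.mem_map]
      refine ⟨(x : ↥(A.H n)) + a2, add_mem x.2 (A.L_antitone n (by omega) ha2mem), ?_⟩
      rw [map_add, ha2]
      abel
  intro s hs
  exact main (sB - s).toNat s hs (by omega)

private lemma SSRE_range_le (A B : ConvSS) (φ : ConvSS.Hom A B)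
    (hAtop : ∀ s n : ℤ, s ≤ 0 → A.L s n = ⊤)
    (hBtop : ∀ s n : ℤ, s ≤ 0 → B.L s n = ⊤)
    (hf0 : ∀ (r : ℕ) (q : ℤ), φ.f r 0 q = 0) :
    ∀ n : ℤ, (φ.h n).range ≤ B.L 1 n := by
  intro n y hy
  obtain ⟨a, rfl⟩ := hy
  have hx : a ∈ A.L 0 n := by rw [hAtop 0 n le_rfl]; trivial
  have hy0 : φ.h n a ∈ B.L 0 n := by rw [hBtop 0 n le_rfl]; trivial
  have hn : n = 0 + n := by ring
  set r := max (A.stab 0 n) (B.stab 0 n) with hr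
  have hc := SSRE_compat_abut' A B φ 0 n n hn r (le_max_left _ _) (le_max_right _ _)
    ⟨a, hx⟩ ⟨φ.h n a, hy0⟩ rfl
  rw [hf0 r n] at hc
  simp only [AddMonoidHom.zero_apply] at hc
  have h0 := (B.stabIso' 0 n n hn r (le_max_right _ _)).injective
    (hc.trans (map_zero (B.stabIso' 0 n n hn r (le_max_right _ _))).symm)
  have := (QuotientAddGroup.eq_zero_iff _).mp h0
  rw [AddSubgroup.mem_addSubgroupOf] at this
  rwa [zero_add] at this

end SSREHelpers

/-- Let `φ : E → F` be a morphism of bounded spectral sequences living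
in the columns `p ≥ 0` (I/IV quadrants), converging to filtered abutments `H_E`, `H_F`.
If on the `E₂`-page `φ₂^{p,q}` is an isomorphism for `p > 1`, an epimorphism for `p = 1`
and zero for `p = 0`, then `φ` is an epimorphism on all later pages in columns `p ≥ 1`
(in particular `φ_∞^{p,q}` is epic for `p ≥ 1`), and the image of the induced map
`H(φ) : H_E → H_F` equals the filtration subspace `L^1 H_F`. -/
theorem ss_realignment_epi (A B : ConvSS) (φ : ConvSS.Hom A B)
    (hAcol : ∀ p q : ℤ, p < 0 → Subsingleton ↥(A.E 0 p q))
    (hBcol : ∀ p q : ℤ, p < 0 → Subsingleton ↥(B.E 0 p q))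
    (hiso : ∀ p q : ℤ, 1 < p → Function.Bijective (φ.f 0 p q))
    (hepi : ∀ q : ℤ, Function.Surjective (φ.f 0 1 q))
    (hzero : ∀ q : ℤ, φ.f 0 0 q = 0) :
    (∀ (r : ℕ) (p q : ℤ), 1 ≤ p → Function.Surjective (φ.f r p q)) ∧
    (∀ n : ℤ, (φ.h n).range = B.L 1 n) := by
  have main := SSRE_main A B φ hiso hepi
  have hsurj : ∀ (r : ℕ) (p q : ℤ), 1 ≤ p → Function.Surjective (φ.f r p q) :=
    fun r p q hp => (main r).1 p q hp
  refine ⟨hsurj, fun n => ?_⟩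
  apply le_antisymm
  · exact SSRE_range_le A B φ (SSRE_Ltop A (SSRE_subs A hAcol))
      (SSRE_Ltop B (SSRE_subs B hBcol)) (SSRE_fzero A B φ hzero) n
  · intro b hb
    have := SSRE_incl A B φ hsurj n 1 le_rfl hb
    rw [AddSubgroup.mem_map] at this
    obtain ⟨x, _, hhx⟩ := this
    exact ⟨x, hhx⟩
end

section
/- Let n ≥ 0 and let E_0 → E_{-1} → ⋯ → E_{-n} → E_{-n-1} = 0 be a chain of morphisms of bounded spectral sequences, with composite maps φ(i,j): E_{-i} → E_{-j} for i < j. Assume (a) the E_2-page of E_{-i} vanishes outside columns p ∈ [-n, -i], and (b) for each 0 ≤ i ≤ n, the map φ_2^{p,q}(-i, -i-1) is an isomorphism for p ≤ -i-2 and a monomorphism for p = -i-1. Then for every 0 ≤ i ≤ n, the filtration subspace L^{-i} of the abutment of E_0 equals the kernel of the induced map on abutments H_{E_0} → H_{E_{-i-1}}. -/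
open CategoryTheory

/-- The composite map on abutments `H_{E_0} → H_{E_i}` induced by a chain of morphisms
of spectral sequences `E_0 → E_1 → E_2 → ⋯`. -/
def abutComp (𝔼 : ℕ → ConvSS) (ψ : ∀ i : ℕ, ConvSS.Hom (𝔼 i) (𝔼 (i + 1))) (m : ℤ) :
    ∀ i : ℕ, ↥((𝔼 0).H m) →+ ↥((𝔼 i).H m)
  | 0 => AddMonoidHom.id _
  | (i + 1) => ((ψ i).h m).comp (abutComp 𝔼 ψ m i)

section Aux

open Function

lemma subsingleton_pages (S : ConvSS) (p : ℤ)
    (h0 : ∀ q : ℤ, Subsingleton ↥(S.E 0 p q)) : ∀ (r : ℕ) (q : ℤ), Subsingleton ↥(S.E r p q) := by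
  intro r
  induction r with
  | zero => exact h0
  | succ r ih =>
    intro q
    haveI := ih q
    haveI : Subsingleton
        ↥((S.d r p q (p + ((r : ℤ) + 2)) (q - ((r : ℤ) + 2) + 1) rfl rfl).ker) :=
      ⟨fun a b => Subtype.ext (Subsingleton.elim _ _)⟩
    haveI : Subsingleton
        (↥((S.d r p q (p + ((r : ℤ) + 2)) (q - ((r : ℤ) + 2) + 1) rfl rfl).ker) ⧸
          ((S.d r (p - ((r : ℤ) + 2)) (q + ((r : ℤ) + 2) - 1) p q (by ring)
              (by ring)).range.addSubgroupOf
            (S.d r p q (p + ((r : ℤ) + 2)) (q - ((r : ℤ) + 2) + 1) rfl rfl).ker)) :=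
      QuotientAddGroup.mk_surjective.subsingleton
    exact (S.next r p q).toEquiv.subsingleton

lemma L_collapse (S : ConvSS) (s t : ℤ)
    (h : Subsingleton ↥(S.E (S.stab s t) s t)) : S.L s (s + t) = S.L (s + 1) (s + t) := by
  refine le_antisymm ?_ (S.L_antitone _ (by omega : s ≤ s + 1))
  intro x hx
  haveI := h
  haveI : Subsingleton (↥(S.L s (s + t)) ⧸ (S.L (s + 1) (s + t)).addSubgroupOf (S.L s (s + t))) :=
    (S.stabIso s t (S.stab s t) le_rfl).toEquiv.subsingleton
  have h2 : (QuotientAddGroup.mk (⟨x, hx⟩ : ↥(S.L s (s + t))) :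
      ↥(S.L s (s + t)) ⧸ (S.L (s + 1) (s + t)).addSubgroupOf (S.L s (s + t))) = 0 :=
    Subsingleton.elim _ _
  exact (AddSubgroup.mem_addSubgroupOf).1 ((QuotientAddGroup.eq_zero_iff _).1 h2)

lemma L_collapse' (S : ConvSS) (s m : ℤ)
    (h : Subsingleton ↥(S.E (S.stab s (m - s)) s (m - s))) : S.L s m = S.L (s + 1) m := by
  have := L_collapse S s (m - s) h
  rwa [show s + (m - s) = m by ring] at this

lemma L_chain (S : ConvSS) (m a : ℤ) (k : ℕ)
    (h : ∀ j : ℤ, a ≤ j → j < a + k → S.L j m = S.L (j + 1) m) : S.L a m = S.L (a + k) m := by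
  induction k with
  | zero => simp
  | succ k ih =>
    have hcast : ((k + 1 : ℕ) : ℤ) = (k : ℤ) + 1 := by push_cast; ring
    rw [hcast, show a + ((k : ℤ) + 1) = (a + k) + 1 by ring,
      ← h (a + k) (by omega) (by omega)]
    exact ih (fun j hj hj2 => h j hj (by omega))

lemma L_top (S : ConvSS) (m s0 : ℤ) (h : ∀ s : ℤ, s < s0 → S.L s m = S.L (s + 1) m) :
    S.L s0 m = ⊤ := by
  obtain ⟨a, ha⟩ := S.L_exhaustive m
  rcases le_or_gt s0 a with hle | hlt
  · exact le_antisymm le_top (ha ▸ S.L_antitone m hle)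
  · have := L_chain S m a (s0 - a).toNat (fun j hj hj2 => h j (by omega))
    rw [show a + ((s0 - a).toNat : ℤ) = s0 by omega] at this
    rw [← this, ha]

lemma L_bot (S : ConvSS) (m s0 : ℤ) (h : ∀ s : ℤ, s0 ≤ s → S.L s m = S.L (s + 1) m) :
    S.L s0 m = ⊥ := by
  obtain ⟨a, ha⟩ := S.L_separated m
  rcases le_or_gt a s0 with hle | hlt
  · exact le_antisymm (ha ▸ S.L_antitone m hle) bot_le
  · have := L_chain S m s0 (a - s0).toNat (fun j hj hj2 => h j hj)
    rw [show s0 + ((a - s0).toNat : ℤ) = a by omega, ha] at this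
    exact this

lemma hom_inj_surj (A B : ConvSS) (φ : ConvSS.Hom A B) (c : ℤ)
    (h1 : ∀ p q : ℤ, p ≤ c - 1 → Function.Injective (φ.f 0 p q))
    (h2 : ∀ p q : ℤ, p ≤ c - 2 → Function.Surjective (φ.f 0 p q)) :
    ∀ r : ℕ, (∀ p q : ℤ, p ≤ c - 1 → Function.Injective (φ.f r p q)) ∧
      (∀ p q : ℤ, p ≤ c - 2 - r → Function.Surjective (φ.f r p q)) := by
  intro r
  induction r with
  | zero => exact ⟨h1, fun p q hp => h2 p q (by push_cast at hp; omega)⟩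
  | succ r ih =>
    obtain ⟨ihinj, ihsurj⟩ := ih
    constructor
    · intro p q hp
      rw [injective_iff_map_eq_zero]
      intro z hz
      obtain ⟨x, hx⟩ := QuotientAddGroup.mk_surjective (A.next r p q z)
      have hyk : (φ.f r p q x.1) ∈
          (B.d r p q (p + ((r : ℤ) + 2)) (q - ((r : ℤ) + 2) + 1) rfl rfl).ker := by
        rw [AddMonoidHom.mem_ker]
        have hc := DFunLike.congr_fun
          (φ.comm r p q (p + ((r : ℤ) + 2)) (q - ((r : ℤ) + 2) + 1) rfl rfl) x.1
        simp only [AddMonoidHom.comp_apply] at hc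
        rw [← hc, AddMonoidHom.mem_ker.1 x.2, map_zero]
      have hcn := φ.compat_next r p q x ⟨φ.f r p q x.1, hyk⟩ rfl z hx.symm
      rw [hz, map_zero] at hcn
      have hmemB := (AddSubgroup.mem_addSubgroupOf).1 ((QuotientAddGroup.eq_zero_iff _).1 hcn.symm)
      obtain ⟨w, hw⟩ := hmemB
      obtain ⟨u, hu⟩ := ihsurj (p - ((r : ℤ) + 2)) (q + ((r : ℤ) + 2) - 1)
        (by push_cast; omega) w
      have hfu := DFunLike.congr_fun
        (φ.comm r (p - ((r : ℤ) + 2)) (q + ((r : ℤ) + 2) - 1) p q (by ring) (by ring)) u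
      simp only [AddMonoidHom.comp_apply] at hfu
      have hzero : φ.f r p q (x.1 - A.d r (p - ((r : ℤ) + 2)) (q + ((r : ℤ) + 2) - 1) p q
          (by ring) (by ring) u) = 0 := by
        rw [map_sub, hfu, hu, hw]
        exact sub_self _
      have hx1 := (injective_iff_map_eq_zero _).1 (ihinj p q hp) _ hzero
      have hmem : x ∈ (A.d r (p - ((r : ℤ) + 2)) (q + ((r : ℤ) + 2) - 1) p q (by ring)
          (by ring)).range.addSubgroupOf
          (A.d r p q (p + ((r : ℤ) + 2)) (q - ((r : ℤ) + 2) + 1) rfl rfl).ker := by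
        rw [AddSubgroup.mem_addSubgroupOf]
        exact ⟨u, by rw [← sub_eq_zero]; exact (neg_eq_zero.1 (by rw [neg_sub]; exact hx1))⟩
      have hnz : A.next r p q z = 0 := by
        rw [← hx]
        exact (QuotientAddGroup.eq_zero_iff _).2 hmem
      exact (A.next r p q).injective (by rw [hnz, map_zero])
    · intro p q hp
      intro z'
      obtain ⟨y, hy⟩ := QuotientAddGroup.mk_surjective (B.next r p q z')
      obtain ⟨x0, hx0⟩ := ihsurj p q (by push_cast at hp ⊢; omega) y.1
      have hker : x0 ∈ (A.d r p q (p + ((r : ℤ) + 2)) (q - ((r : ℤ) + 2) + 1) rfl rfl).ker := by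
        rw [AddMonoidHom.mem_ker]
        apply (injective_iff_map_eq_zero _).1
          (ihinj (p + ((r : ℤ) + 2)) (q - ((r : ℤ) + 2) + 1) (by push_cast at hp ⊢; omega))
        have hc := DFunLike.congr_fun
          (φ.comm r p q (p + ((r : ℤ) + 2)) (q - ((r : ℤ) + 2) + 1) rfl rfl) x0
        simp only [AddMonoidHom.comp_apply] at hc
        rw [hc, hx0, AddMonoidHom.mem_ker.1 y.2]
      refine ⟨(A.next r p q).symm (QuotientAddGroup.mk ⟨x0, hker⟩), ?_⟩
      have hcn := φ.compat_next r p q ⟨x0, hker⟩ y hx0.symm _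
        ((A.next r p q).apply_symm_apply _)
      apply (B.next r p q).injective
      rw [hcn, hy]

end Aux
/-- The composite map on pages `E_{𝔼 0} → E_{𝔼 k}` induced by the chain of morphisms. -/
def fComp (𝔼 : ℕ → ConvSS) (ψ : ∀ i : ℕ, ConvSS.Hom (𝔼 i) (𝔼 (i + 1))) (r : ℕ) (p q : ℤ) :
    ∀ k : ℕ, ↥((𝔼 0).E r p q) →+ ↥((𝔼 k).E r p q)
  | 0 => AddMonoidHom.id _
  | (k + 1) => ((ψ k).f r p q).comp (fComp 𝔼 ψ r p q k)

lemma abut_mem (𝔼 : ℕ → ConvSS) (ψ : ∀ i : ℕ, ConvSS.Hom (𝔼 i) (𝔼 (i + 1))) (s m : ℤ)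
    (x : ↥((𝔼 0).H m)) (hx : x ∈ (𝔼 0).L s m) :
    ∀ k : ℕ, abutComp 𝔼 ψ m k x ∈ (𝔼 k).L s m := by
  intro k
  induction k with
  | zero => exact hx
  | succ k ih => exact (ψ k).filt s m (AddSubgroup.mem_map.2 ⟨_, ih, rfl⟩)

lemma stab_chain (𝔼 : ℕ → ConvSS) (ψ : ∀ i : ℕ, ConvSS.Hom (𝔼 i) (𝔼 (i + 1)))
    (s t : ℤ) (r : ℕ) :
    ∀ k : ℕ, ∀ hk : (∀ j : ℕ, j ≤ k → (𝔼 j).stab s t ≤ r),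
    ∀ (x : ↥((𝔼 0).L s (s + t))) (y : ↥((𝔼 k).L s (s + t))),
      (y : ↥((𝔼 k).H (s + t))) = abutComp 𝔼 ψ (s + t) k (x : ↥((𝔼 0).H (s + t))) →
      (𝔼 k).stabIso s t r (hk k le_rfl) (QuotientAddGroup.mk y) =
        fComp 𝔼 ψ r s t k ((𝔼 0).stabIso s t r (hk 0 (Nat.zero_le k))
          (QuotientAddGroup.mk x)) := by
  intro k
  induction k with
  | zero =>
    intro hk x y hy
    have hxy : y = x := Subtype.ext hy
    subst hxy
    rfl
  | succ k ih =>
    intro hk x y hy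
    have hmem : abutComp 𝔼 ψ (s + t) k (x : ↥((𝔼 0).H (s + t))) ∈ (𝔼 k).L s (s + t) :=
      abut_mem 𝔼 ψ s (s + t) x x.2 k
    have hih := ih (fun j hj => hk j (Nat.le_succ_of_le hj)) x ⟨_, hmem⟩ rfl
    have hc := (ψ k).compat_abut s t r (hk k (Nat.le_succ k)) (hk (k + 1) le_rfl)
      ⟨_, hmem⟩ y hy
    rw [hc, hih]
    rfl
/-- Let `n ≥ 0` and `E_0 → E_{-1} → ⋯ → E_{-n} → E_{-n-1} = 0` be a
chain of morphisms of bounded spectral sequences (here `𝔼 i` denotes `E_{-i}` and `ψ i`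
the morphism `E_{-i} → E_{-i-1}`).  Assume (a) the `E₂`-page of `E_{-i}` vanishes
outside the columns `p ∈ [-n, -i]`, and (b) for each `0 ≤ i ≤ n` the map
`φ₂^{p,q}(-i, -i-1)` is an isomorphism for `p ≤ -i-2` and a monomorphism for
`p = -i-1`.  Then for every `0 ≤ i ≤ n` the filtration subspace `L^{-i}` of the
abutment of `E_0` equals the kernel of the induced map `H_{E_0} → H_{E_{-i-1}}`. -/
theorem ss_flag_filtration_ker (n : ℕ) (𝔼 : ℕ → ConvSS)
    (ψ : ∀ i : ℕ, ConvSS.Hom (𝔼 i) (𝔼 (i + 1)))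
    (hlast : ∀ (r : ℕ) (p q : ℤ), Subsingleton ↥((𝔼 (n + 1)).E r p q))
    (ha : ∀ i : ℕ, i ≤ n + 1 → ∀ p q : ℤ,
      (p < -(n : ℤ) ∨ -(i : ℤ) < p) → Subsingleton ↥((𝔼 i).E 0 p q))
    (hb_iso : ∀ i : ℕ, i ≤ n → ∀ p q : ℤ, p ≤ -(i : ℤ) - 2 →
      Function.Bijective ((ψ i).f 0 p q))
    (hb_mono : ∀ i : ℕ, i ≤ n → ∀ q : ℤ,
      Function.Injective ((ψ i).f 0 (-(i : ℤ) - 1) q)) :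
    ∀ i : ℕ, i ≤ n → ∀ m : ℤ,
      (𝔼 0).L (-(i : ℤ)) m = (abutComp 𝔼 ψ m (i + 1)).ker := by

  have hvan : ∀ i : ℕ, i ≤ n + 1 → ∀ (r : ℕ) (p q : ℤ), (p < -(n : ℤ) ∨ -(i : ℤ) < p) →
      Subsingleton ↥((𝔼 i).E r p q) :=
    fun i hi r p q hp => subsingleton_pages (𝔼 i) p (fun q' => ha i hi p q' hp) r q
  have hinj : ∀ j : ℕ, j ≤ n → ∀ (r : ℕ) (p q : ℤ), p ≤ -(j : ℤ) - 1 →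
      Function.Injective ((ψ j).f r p q) := by
    intro j hj r p q hp
    refine (hom_inj_surj (𝔼 j) (𝔼 (j + 1)) (ψ j) (-(j : ℤ))
      (fun p q hp => ?_) (fun p q hp => (hb_iso j hj p q (by omega)).2) r).1 p q (by omega)
    rcases eq_or_lt_of_le hp with heq | hlt
    · subst heq
      exact hb_mono j hj q
    · exact (hb_iso j hj p q (by omega)).1
  have hfinj : ∀ (r : ℕ) (p q : ℤ) (i : ℕ), i ≤ n → p ≤ -(i : ℤ) - 1 →
      ∀ k : ℕ, k ≤ i + 1 → Function.Injective (fComp 𝔼 ψ r p q k) := by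
    intro r p q i hi hp k
    induction k with
    | zero => exact fun _ a b hab => hab
    | succ k ih =>
      intro hk
      have h1 : Function.Injective ((ψ k).f r p q) := hinj k (by omega) r p q (by omega)
      exact h1.comp (ih (by omega))
  intro i hi m
  ext x
  simp only [AddMonoidHom.mem_ker]
  constructor
  · intro hx
    have h1 : abutComp 𝔼 ψ m (i + 1) x ∈ (𝔼 (i + 1)).L (-(i : ℤ)) m :=
      abut_mem 𝔼 ψ _ m x hx (i + 1)
    have h2 : (𝔼 (i + 1)).L (-(i : ℤ)) m = ⊥ :=
      L_bot (𝔼 (i + 1)) m (-(i : ℤ)) (fun s hs => L_collapse' _ s m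
        (hvan (i + 1) (by omega) _ s (m - s) (Or.inr (by push_cast; omega))))
    rw [h2, AddSubgroup.mem_bot] at h1
    exact h1
  · intro hx
    have key : ∀ s : ℤ, -(n : ℤ) ≤ s → s ≤ -(i : ℤ) → x ∈ (𝔼 0).L s m := by
      refine Int.le_induction (motive := fun s _ => s ≤ -(i : ℤ) → x ∈ (𝔼 0).L s m) ?_ ?_
      · intro _
        have h2 : (𝔼 0).L (-(n : ℤ)) m = ⊤ :=
          L_top (𝔼 0) m (-(n : ℤ)) (fun s hs => L_collapse' _ s m
            (hvan 0 (by omega) _ s (m - s) (Or.inl (by push_cast; omega))))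
        rw [h2]
        trivial
      · intro s hs ih hs1
        have hxs : x ∈ (𝔼 0).L s m := ih (by omega)
        clear ih hs
        obtain ⟨t, rfl⟩ : ∃ t : ℤ, m = s + t := ⟨m - s, by ring⟩
        set r : ℕ := (Finset.range (i + 2)).sup (fun k => (𝔼 k).stab s t) with hr
        have hrk : ∀ j : ℕ, j ≤ i + 1 → (𝔼 j).stab s t ≤ r := fun j hj =>
          Finset.le_sup (f := fun k => (𝔼 k).stab s t) (Finset.mem_range.2 (by omega))
        have hchain := stab_chain 𝔼 ψ s t r (i + 1) hrk ⟨x, hxs⟩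
          ⟨0, zero_mem _⟩ hx.symm
        rw [show (⟨0, zero_mem _⟩ : ↥((𝔼 (i + 1)).L s (s + t))) = 0 from rfl,
          QuotientAddGroup.mk_zero, map_zero] at hchain
        have h0 : (𝔼 0).stabIso s t r (hrk 0 (Nat.zero_le _))
            (QuotientAddGroup.mk ⟨x, hxs⟩) = 0 :=
          hfinj r s t i hi (by omega) (i + 1) le_rfl (by rw [map_zero]; exact hchain.symm)
        have hq : (QuotientAddGroup.mk (⟨x, hxs⟩ : ↥((𝔼 0).L s (s + t))) :
            ↥((𝔼 0).L s (s + t)) ⧸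
              ((𝔼 0).L (s + 1) (s + t)).addSubgroupOf ((𝔼 0).L s (s + t))) = 0 :=
          ((𝔼 0).stabIso s t r (hrk 0 (Nat.zero_le _))).injective
            (by rw [map_zero]; exact h0)
        exact (AddSubgroup.mem_addSubgroupOf).1 ((QuotientAddGroup.eq_zero_iff _).1 hq)
    exact key (-(i : ℤ)) (by omega) le_rfl
end
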